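/- Let n₁, n₂ ≥ 1, let A₁ be an n₁×n₁ complex matrix, A₂ an n₂×n₂ complex matrix, b₁, c₁ ∈ ℂ^{n₁}, b₂, c₂ ∈ ℂ^{n₂}, and let λ ∈ ℂ be such that λ·I − A₁ and λ·I − A₂ are both invertible (λ is not an eigenvalue of A₁ or A₂). Suppose c₁ᵀ·(λI − A₁)⁻¹·b₁ ≠ c₂ᵀ·(λI − A₂)⁻¹·b₂. Then for every τ > 0 and all initial states x₁ ∈ ℂ^{n₁}, x₂ ∈ ℂ^{n₂}, the total outputs y₁(t) = c₁ᵀ·exp(tA₁)·x₁ + ∫₀ᵗ c₁ᵀ·exp((t−s)A₁)·b₁·e^{λs} ds and y₂(t) = c₂ᵀ·exp(tA₂)·x₂ + ∫₀ᵗ c₂ᵀ·exp((t−s)A₂)·b₂·e^{λs} ds do not coincide for all t ∈ [0, τ); i.e., there exists t ∈ [0, τ) with y₁(t) ≠ y₂(t). -/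

import Mathlib

open Matrix

set_option maxHeartbeats 1000000

section auxiliary

open NormedSpace

attribute [local instance] Matrix.linftyOpNormedAddCommGroup Matrix.linftyOpNormedRing
  Matrix.linftyOpNormedAlgebra

noncomputable def auxL {n : ℕ} (c v : Fin n → ℂ) : Matrix (Fin n) (Fin n) ℂ →L[ℂ] ℂ :=
  LinearMap.toContinuousLinearMap
    { toFun := fun M => c ⬝ᵥ (M *ᵥ v)
      map_add' := by intro M N; simp [Matrix.add_mulVec, dotProduct_add]
      map_smul' := by intro a M; simp [Matrix.smul_mulVec, dotProduct_smul] }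

lemma auxL_apply {n : ℕ} (c v : Fin n → ℂ) (M : Matrix (Fin n) (Fin n) ℂ) :
    auxL c v M = c ⬝ᵥ (M *ᵥ v) := rfl

lemma hasDerivAt_aux {n : ℕ} (A : Matrix (Fin n) (Fin n) ℂ) (c v : Fin n → ℂ) (t : ℝ) :
    HasDerivAt (fun t : ℝ => c ⬝ᵥ (exp ((t : ℂ) • A) *ᵥ v))
      (c ⬝ᵥ (exp ((t : ℂ) • A) *ᵥ (A *ᵥ v))) t := by
  have h1 : HasDerivAt (fun z : ℂ => exp (z • A)) (A * exp ((t : ℂ) • A)) (t : ℂ) :=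
    hasDerivAt_exp_smul_const' A (t : ℂ)
  have h2 : HasDerivAt (fun z : ℂ => auxL c v (exp (z • A)))
      (auxL c v (A * exp ((t : ℂ) • A))) (t : ℂ) :=
    ((auxL c v).hasFDerivAt.comp_hasDerivAt _ h1)
  have h3 := h2.comp_ofReal
  have hc : A * exp ((t : ℂ) • A) = exp ((t : ℂ) • A) * A :=
    (((Commute.refl A).smul_right ((t : ℂ))).exp_right)
  have h4 : auxL c v (A * exp ((t : ℂ) • A)) = c ⬝ᵥ (exp ((t : ℂ) • A) *ᵥ (A *ᵥ v)) := by
    rw [auxL_apply, Matrix.mulVec_mulVec, hc]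
  rw [h4] at h3
  exact h3

lemma continuous_aux {n : ℕ} (A : Matrix (Fin n) (Fin n) ℂ) (c v : Fin n → ℂ) :
    Continuous (fun t : ℝ => c ⬝ᵥ (exp ((t : ℂ) • A) *ᵥ v)) :=
  continuous_iff_continuousAt.2 fun t => (hasDerivAt_aux A c v t).continuousAt

lemma integral_aux {n : ℕ} (A : Matrix (Fin n) (Fin n) ℂ) (b c : Fin n → ℂ) (l : ℂ)
    (hA : IsUnit (l • (1 : Matrix (Fin n) (Fin n) ℂ) - A)) (t : ℝ) :
    (∫ s in (0:ℝ)..t, (c ⬝ᵥ (exp (((t - s : ℝ) : ℂ) • A) *ᵥ b)) * Complex.exp (l * s))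
      = (c ⬝ᵥ ((l • (1 : Matrix (Fin n) (Fin n) ℂ) - A)⁻¹ *ᵥ b)) * Complex.exp (l * t)
        - c ⬝ᵥ (exp ((t : ℂ) • A) *ᵥ ((l • (1 : Matrix (Fin n) (Fin n) ℂ) - A)⁻¹ *ᵥ b)) := by
  set w := (l • (1 : Matrix (Fin n) (Fin n) ℂ) - A)⁻¹ *ᵥ b with hw
  have hb : (l • (1 : Matrix (Fin n) (Fin n) ℂ) - A) *ᵥ w = b := by
    rw [hw, Matrix.mulVec_mulVec,
      Matrix.mul_nonsing_inv _ ((Matrix.isUnit_iff_isUnit_det _).mp hA), Matrix.one_mulVec]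
  have key : ∀ s : ℝ, HasDerivAt
      (fun s : ℝ => (c ⬝ᵥ (exp (((t - s : ℝ) : ℂ) • A) *ᵥ w)) * Complex.exp (l * s))
      ((c ⬝ᵥ (exp (((t - s : ℝ) : ℂ) • A) *ᵥ b)) * Complex.exp (l * s)) s := by
    intro s
    have hg : HasDerivAt (fun s : ℝ => c ⬝ᵥ (exp (((t - s : ℝ) : ℂ) • A) *ᵥ w))
        (-(c ⬝ᵥ (exp (((t - s : ℝ) : ℂ) • A) *ᵥ (A *ᵥ w)))) s := by
      have := (hasDerivAt_aux A c w (t - s)).scomp s ((hasDerivAt_id s).const_sub t)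
      simp only [Function.comp_def, neg_smul, one_smul] at this
      exact this
    have he : HasDerivAt (fun s : ℝ => Complex.exp (l * s)) (l * Complex.exp (l * s)) s := by
      have h0 : HasDerivAt (fun z : ℂ => Complex.exp (l * z)) (Complex.exp (l * s) * (l * 1)) (s:ℂ) :=
        (Complex.hasDerivAt_exp _).comp _ ((hasDerivAt_id (s:ℂ)).const_mul l)
      have := h0.comp_ofReal
      simpa [mul_comm] using this
    have hmul := hg.mul he
    have hbw : c ⬝ᵥ (exp (((t - s : ℝ) : ℂ) • A) *ᵥ b)
        = l * (c ⬝ᵥ (exp (((t - s : ℝ) : ℂ) • A) *ᵥ w))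
          - c ⬝ᵥ (exp (((t - s : ℝ) : ℂ) • A) *ᵥ (A *ᵥ w)) := by
      conv_lhs => rw [← hb]
      rw [Matrix.sub_mulVec, Matrix.mulVec_sub, dotProduct_sub, Matrix.smul_mulVec,
        Matrix.one_mulVec, Matrix.mulVec_smul, dotProduct_smul]
      simp [smul_eq_mul]
    rw [hbw]
    convert hmul using 1
    · rfl
    · rfl
    ring
  have hint : IntervalIntegrable
      (fun s : ℝ => (c ⬝ᵥ (exp (((t - s : ℝ) : ℂ) • A) *ᵥ b)) * Complex.exp (l * s))
      MeasureTheory.volume 0 t := by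
    apply Continuous.intervalIntegrable
    apply Continuous.mul
    · exact (continuous_aux A c b).comp (continuous_const.sub continuous_id)
    · exact Complex.continuous_exp.comp (continuous_const.mul Complex.continuous_ofReal)
  have hftc := intervalIntegral.integral_eq_sub_of_hasDerivAt (fun s _ => key s) hint
  rw [hftc]
  simp [Complex.exp_zero]

lemma cexp_deriv_aux (l : ℂ) (t : ℝ) :
    HasDerivAt (fun s : ℝ => Complex.exp (l * s)) (l * Complex.exp (l * t)) t := by
  have h0 : HasDerivAt (fun z : ℂ => Complex.exp (l * z)) (Complex.exp (l * t) * (l * 1)) (t:ℂ) :=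
    (Complex.hasDerivAt_exp _).comp _ ((hasDerivAt_id (t:ℂ)).const_mul l)
  have := h0.comp_ofReal
  simpa [mul_comm] using this

lemma eval_charpoly_aux {n : ℕ} (A : Matrix (Fin n) (Fin n) ℂ) (l : ℂ) :
    (Matrix.charpoly A).eval l = (l • (1 : Matrix (Fin n) (Fin n) ℂ) - A).det := by
  rw [Matrix.charpoly, ← Polynomial.coe_evalRingHom, RingHom.map_det]
  congr 1
  ext i j
  by_cases h : i = j
  · subst h
    simp [Matrix.charmatrix_apply_eq, Matrix.one_apply]
  · simp [Matrix.charmatrix_apply_ne, Matrix.one_apply, h]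

end auxiliary

/-- Single-simple-pole case of the input-design theorem: if `λ` is not an eigenvalue of
`A₁` or `A₂` and the transfer functions differ at `λ`, i.e.
`c₁ᵀ(λI−A₁)⁻¹b₁ ≠ c₂ᵀ(λI−A₂)⁻¹b₂`, then for any `τ > 0` and any initial states the total
outputs (initial-state response plus input response to `u(t) = e^{λt}`) of the two
subsystems differ at some `t ∈ [0, τ)`. -/
theorem stmt10 (n₁ n₂ : ℕ) (hn₁ : 1 ≤ n₁) (hn₂ : 1 ≤ n₂)
    (A₁ : Matrix (Fin n₁) (Fin n₁) ℂ) (A₂ : Matrix (Fin n₂) (Fin n₂) ℂ)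
    (b₁ c₁ : Fin n₁ → ℂ) (b₂ c₂ : Fin n₂ → ℂ) (l : ℂ)
    (h₁ : IsUnit (l • (1 : Matrix (Fin n₁) (Fin n₁) ℂ) - A₁))
    (h₂ : IsUnit (l • (1 : Matrix (Fin n₂) (Fin n₂) ℂ) - A₂))
    (hG : c₁ ⬝ᵥ ((l • (1 : Matrix (Fin n₁) (Fin n₁) ℂ) - A₁)⁻¹ *ᵥ b₁)
        ≠ c₂ ⬝ᵥ ((l • (1 : Matrix (Fin n₂) (Fin n₂) ℂ) - A₂)⁻¹ *ᵥ b₂)) :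
    ∀ τ : ℝ, 0 < τ → ∀ x₁ : Fin n₁ → ℂ, ∀ x₂ : Fin n₂ → ℂ,
      ∃ t ∈ Set.Ico (0 : ℝ) τ,
        c₁ ⬝ᵥ (NormedSpace.exp ((t : ℂ) • A₁) *ᵥ x₁)
            + ∫ s in (0 : ℝ)..t,
                (c₁ ⬝ᵥ (NormedSpace.exp (((t - s : ℝ) : ℂ) • A₁) *ᵥ b₁)) * Complex.exp (l * s)
          ≠ c₂ ⬝ᵥ (NormedSpace.exp ((t : ℂ) • A₂) *ᵥ x₂)
            + ∫ s in (0 : ℝ)..t,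
                (c₂ ⬝ᵥ (NormedSpace.exp (((t - s : ℝ) : ℂ) • A₂) *ᵥ b₂)) * Complex.exp (l * s) := by
  intro τ hτ x₁ x₂
  by_contra hcon
  push_neg at hcon
  set w₁ : Fin n₁ → ℂ := (l • (1 : Matrix (Fin n₁) (Fin n₁) ℂ) - A₁)⁻¹ *ᵥ b₁ with hw₁
  set w₂ : Fin n₂ → ℂ := (l • (1 : Matrix (Fin n₂) (Fin n₂) ℂ) - A₂)⁻¹ *ᵥ b₂ with hw₂
  set v₁ : Fin n₁ → ℂ := x₁ - w₁ with hv₁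
  set v₂ : Fin n₂ → ℂ := x₂ - w₂ with hv₂
  set γ : ℂ := c₁ ⬝ᵥ w₁ - c₂ ⬝ᵥ w₂ with hγ
  -- the k-th "derivative" functions vanish on [0, τ)
  have base : ∀ t ∈ Set.Ico (0:ℝ) τ,
      c₁ ⬝ᵥ (NormedSpace.exp ((t:ℂ) • A₁) *ᵥ v₁) - c₂ ⬝ᵥ (NormedSpace.exp ((t:ℂ) • A₂) *ᵥ v₂)
        + γ * Complex.exp (l * t) = 0 := by
    intro t ht
    have h := hcon t ht
    rw [integral_aux A₁ b₁ c₁ l h₁ t, integral_aux A₂ b₂ c₂ l h₂ t] at h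
    simp only [hv₁, hv₂, Matrix.mulVec_sub, dotProduct_sub, hγ]
    linear_combination h
  have hIoo : ∀ k : ℕ, ∀ t ∈ Set.Ioo (0:ℝ) τ,
      c₁ ⬝ᵥ (NormedSpace.exp ((t:ℂ) • A₁) *ᵥ (A₁ ^ k *ᵥ v₁)) - c₂ ⬝ᵥ (NormedSpace.exp ((t:ℂ) • A₂) *ᵥ (A₂ ^ k *ᵥ v₂))
        + γ * l ^ k * Complex.exp (l * t) = 0 := by
    intro k
    induction k with
    | zero =>
      intro t ht
      simpa [Matrix.one_mulVec] using base t ⟨le_of_lt ht.1, ht.2⟩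
    | succ k ih =>
      intro t ht
      have hd : HasDerivAt
          (fun t : ℝ => c₁ ⬝ᵥ (NormedSpace.exp ((t:ℂ) • A₁) *ᵥ (A₁ ^ k *ᵥ v₁))
            - c₂ ⬝ᵥ (NormedSpace.exp ((t:ℂ) • A₂) *ᵥ (A₂ ^ k *ᵥ v₂)) + γ * l ^ k * Complex.exp (l * t))
          (c₁ ⬝ᵥ (NormedSpace.exp ((t:ℂ) • A₁) *ᵥ (A₁ ^ (k+1) *ᵥ v₁))
            - c₂ ⬝ᵥ (NormedSpace.exp ((t:ℂ) • A₂) *ᵥ (A₂ ^ (k+1) *ᵥ v₂))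
            + γ * l ^ (k+1) * Complex.exp (l * t)) t := by
        have d1 := hasDerivAt_aux A₁ c₁ (A₁ ^ k *ᵥ v₁) t
        have d2 := hasDerivAt_aux A₂ c₂ (A₂ ^ k *ᵥ v₂) t
        have d3 := (cexp_deriv_aux l t).const_mul (γ * l ^ k)
        have hcomb := (d1.sub d2).add d3
        convert hcomb using 1
        · rfl
        · rfl
        rw [pow_succ', pow_succ', ← Matrix.mulVec_mulVec, ← Matrix.mulVec_mulVec]
        ring
      have hev : (fun t : ℝ => c₁ ⬝ᵥ (NormedSpace.exp ((t:ℂ) • A₁) *ᵥ (A₁ ^ k *ᵥ v₁))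
            - c₂ ⬝ᵥ (NormedSpace.exp ((t:ℂ) • A₂) *ᵥ (A₂ ^ k *ᵥ v₂)) + γ * l ^ k * Complex.exp (l * t))
          =ᶠ[nhds t] (fun _ => (0:ℂ)) :=
        Filter.eventuallyEq_of_mem (Ioo_mem_nhds ht.1 ht.2) (fun u hu => ih u hu)
      have h0 := hd.deriv
      rw [hev.deriv_eq, deriv_const] at h0
      exact h0.symm
  -- evaluate at t₀ = τ / 2 against arbitrary polynomials
  set t₀ : ℝ := τ / 2 with ht₀def
  have ht₀ : t₀ ∈ Set.Ioo (0:ℝ) τ := ⟨by positivity, by rw [ht₀def]; linarith⟩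
  have hpoly : ∀ p : Polynomial ℂ,
      c₁ ⬝ᵥ (NormedSpace.exp ((t₀:ℂ) • A₁) *ᵥ ((Polynomial.aeval A₁ p) *ᵥ v₁))
        - c₂ ⬝ᵥ (NormedSpace.exp ((t₀:ℂ) • A₂) *ᵥ ((Polynomial.aeval A₂ p) *ᵥ v₂))
        + γ * p.eval l * Complex.exp (l * t₀) = 0 := by
    intro p
    induction p using Polynomial.induction_on' with
    | add p q hp hq =>
      simp only [map_add, Matrix.add_mulVec, Matrix.mulVec_add, dotProduct_add,
        Polynomial.eval_add]
      linear_combination hp + hq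
    | monomial k a =>
      have hm₁ : (Polynomial.aeval A₁ (Polynomial.monomial k a)) *ᵥ v₁ = a • (A₁ ^ k *ᵥ v₁) := by
        rw [Polynomial.aeval_monomial, Algebra.algebraMap_eq_smul_one, smul_mul_assoc, one_mul,
          Matrix.smul_mulVec]
      have hm₂ : (Polynomial.aeval A₂ (Polynomial.monomial k a)) *ᵥ v₂ = a • (A₂ ^ k *ᵥ v₂) := by
        rw [Polynomial.aeval_monomial, Algebra.algebraMap_eq_smul_one, smul_mul_assoc, one_mul,
          Matrix.smul_mulVec]
      rw [hm₁, hm₂, Matrix.mulVec_smul, Matrix.mulVec_smul, dotProduct_smul, dotProduct_smul,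
        Polynomial.eval_monomial]
      have := hIoo k t₀ ht₀
      simp only [smul_eq_mul]
      linear_combination a * this
  have happ := hpoly ((Matrix.charpoly A₁) * (Matrix.charpoly A₂))
  simp only [_root_.map_mul, Matrix.aeval_self_charpoly, zero_mul, mul_zero,
    Matrix.zero_mulVec, Matrix.mulVec_zero, dotProduct_zero, Polynomial.eval_mul] at happ
  have he₁ : (Matrix.charpoly A₁).eval l ≠ 0 := by
    rw [eval_charpoly_aux]
    exact ((Matrix.isUnit_iff_isUnit_det _).mp h₁).ne_zero
  have he₂ : (Matrix.charpoly A₂).eval l ≠ 0 := by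
    rw [eval_charpoly_aux]
    exact ((Matrix.isUnit_iff_isUnit_det _).mp h₂).ne_zero
  have hexp : Complex.exp (l * t₀) ≠ 0 := Complex.exp_ne_zero _
  have hγ0 : γ = 0 := by
    have h' : γ * ((Matrix.charpoly A₁).eval l * (Matrix.charpoly A₂).eval l)
        * Complex.exp (l * t₀) = 0 := by linear_combination happ
    rcases mul_eq_zero.mp h' with h'' | h''
    · rcases mul_eq_zero.mp h'' with h3 | h3
      · exact h3
      · exact absurd h3 (mul_ne_zero he₁ he₂)
    · exact absurd h'' hexp
  exact hG (sub_eq_zero.mp hγ0)
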